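/- Let P be a finite collection of infinite subgroups of a finitely generated group G. Then P is almost malnormal if and only if for any two left cosets A, B ∈ G/P (cosets gP with g ∈ G, P ∈ P), either A = B or the intersection N_n(A) ∩ N_n(B) of their closed n-neighborhoods is a finite subset of G for every n. -/

import Mathlib

open scoped Pointwise

variable {G : Type*} [Group G]

/-- Word distance between `g` and `h` with respect to a generating set `S` (values in `ℕ∞`). -/
noncomputable def wordDist (S : Set G) (g h : G) : ℕ∞ :=
  sInf {n : ℕ∞ | ∃ l : List G, (∀ x ∈ l, x ∈ S ∨ x⁻¹ ∈ S) ∧ l.prod = g⁻¹ * h ∧ (l.length : ℕ∞) = n}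

/-- Closed `r`-neighbourhood of a subset of `G` in the word metric. -/
def nbhd (S : Set G) (r : ℕ∞) (A : Set G) : Set G := {g | ∃ a ∈ A, wordDist S g a ≤ r}

/-- Hausdorff distance between subsets of `G` in the word metric. -/
noncomputable def hdist (S : Set G) (A B : Set G) : ℕ∞ :=
  sInf {r : ℕ∞ | A ⊆ nbhd S r B ∧ B ⊆ nbhd S r A}

/-- The conjugate subgroup `g P g⁻¹`. -/
def conjSub (g : G) (P : Subgroup G) : Subgroup G := ConjAct.toConjAct g • P

/-- The collection of all left cosets `gP`, `g ∈ G`, `P ∈ Ps`, as subsets of `G`. -/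
def cosetsOf (Ps : Set (Subgroup G)) : Set (Set G) :=
  {A | ∃ (g : G) (P : Subgroup G), P ∈ Ps ∧ A = g • (P : Set G)}

/-- A collection of subgroups is almost malnormal if any conjugate of a member meets any
member in a finite subgroup, except for the trivial configurations. -/
def AlmostMalnormal (Ps : Set (Subgroup G)) : Prop :=
  ∀ P ∈ Ps, ∀ P' ∈ Ps, ∀ g : G,
    ((conjSub g P ⊓ P' : Subgroup G) : Set G).Finite ∨ (P = P' ∧ g ∈ P)

/-- A collection of subgroups is reduced if commensurability of a member with a conjugate of a
member only happens trivially. -/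
def Reduced (Ps : Set (Subgroup G)) : Prop :=
  ∀ P ∈ Ps, ∀ Q ∈ Ps, ∀ g : G, Subgroup.Commensurable P (conjSub g Q) → P = Q ∧ g ∈ P

/-! ### Auxiliary lemmas -/

/-- The set of elements expressible as a word of length at most `n`. -/
def ballSet (S : Set G) (n : ℕ) : Set G :=
  {w | ∃ l : List G, (∀ x ∈ l, x ∈ S ∨ x⁻¹ ∈ S) ∧ l.prod = w ∧ l.length ≤ n}

lemma ballSet_finite {S : Set G} (hS : S.Finite) (n : ℕ) : (ballSet S n).Finite := by
  induction n with
  | zero =>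
    refine (Set.finite_singleton (1 : G)).subset ?_
    rintro w ⟨l, -, rfl, hlen⟩
    interval_cases hl : l.length
    · rw [List.length_eq_zero_iff] at hl; simp [hl]
  | succ n ih =>
    have hfin : (ballSet S n ∪ (S ∪ S⁻¹) * ballSet S n).Finite :=
      ih.union (Set.Finite.mul (hS.union hS.inv) ih)
    refine hfin.subset ?_
    rintro w ⟨l, hl, rfl, hlen⟩
    cases l with
    | nil => exact Or.inl ⟨[], by simp⟩
    | cons x l' =>
      refine Or.inr ⟨x, ?_, l'.prod, ⟨l', fun y hy => hl y (List.mem_cons_of_mem _ hy), rfl,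
        by simp at hlen; omega⟩, by simp⟩
      rcases hl x List.mem_cons_self with h | h
      · exact Or.inl h
      · exact Or.inr (Set.mem_inv.mpr (by simpa using h))

lemma ballSet_inv {S : Set G} {n : ℕ} {b : G} (hb : b ∈ ballSet S n) : b⁻¹ ∈ ballSet S n := by
  obtain ⟨l, hl, hprod, hlen⟩ := hb
  refine ⟨(l.map fun x => x⁻¹).reverse, ?_, ?_, by simpa using hlen⟩
  · intro x hx
    simp only [List.mem_reverse, List.mem_map] at hx
    obtain ⟨y, hy, rfl⟩ := hx
    rcases hl y hy with h | h
    · exact Or.inr (by simpa using h)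
    · exact Or.inl h
  · rw [← List.prod_inv_reverse, hprod]

lemma wordDist_le_iff {S : Set G} {g h : G} {n : ℕ} :
    wordDist S g h ≤ (n : ℕ∞) ↔
      ∃ l : List G, (∀ x ∈ l, x ∈ S ∨ x⁻¹ ∈ S) ∧ l.prod = g⁻¹ * h ∧ l.length ≤ n := by
  constructor
  · intro hle
    by_contra hcon
    push_neg at hcon
    have hge : ((n : ℕ∞) + 1) ≤ wordDist S g h := by
      refine le_sInf ?_
      rintro m ⟨l, hl, hprod, rfl⟩
      exact_mod_cast Nat.succ_le_of_lt (hcon l hl hprod)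
    have : (n : ℕ∞) + 1 ≤ (n : ℕ∞) := hge.trans hle
    have : (n : ℕ) + 1 ≤ n := by exact_mod_cast this
    omega
  · rintro ⟨l, hl, hprod, hlen⟩
    refine le_trans (sInf_le ⟨l, hl, hprod, rfl⟩) ?_
    exact_mod_cast hlen

lemma mem_nbhd_coset_iff {S : Set G} {n : ℕ} {g x : G} {P : Subgroup G} :
    x ∈ nbhd S (n : ℕ∞) (g • (P : Set G)) ↔
      ∃ p ∈ P, ∃ b ∈ ballSet S n, x = g * p * b := by
  constructor
  · rintro ⟨a, ⟨p, hp, rfl⟩, hdist⟩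
    obtain ⟨l, hl, hprod, hlen⟩ := wordDist_le_iff.mp hdist
    have hb : l.prod ∈ ballSet S n := ⟨l, hl, rfl, hlen⟩
    refine ⟨p, hp, l.prod⁻¹, ballSet_inv hb, ?_⟩
    have : l.prod = x⁻¹ * (g * p) := by simpa using hprod
    rw [this]; group
  · rintro ⟨p, hp, b, ⟨l, hl, hprod, hlen⟩, rfl⟩
    have hbinv : b⁻¹ ∈ ballSet S n := ballSet_inv ⟨l, hl, hprod, hlen⟩
    obtain ⟨l', hl', hprod', hlen'⟩ := hbinv
    refine ⟨g * p, ⟨p, hp, by simp [smul_eq_mul]⟩, ?_⟩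
    refine wordDist_le_iff.mpr ⟨l', hl', ?_, hlen'⟩
    rw [hprod']; group

lemma smul_coe_of_mem {P : Subgroup G} {k : G} (hk : k ∈ P) : k • (P : Set G) = P := by
  ext x
  rw [Set.mem_smul_set_iff_inv_smul_mem, smul_eq_mul, SetLike.mem_coe, SetLike.mem_coe]
  exact P.mul_mem_cancel_left (P.inv_mem hk)

lemma mem_conjSub {g x : G} {P : Subgroup G} :
    x ∈ conjSub g P ↔ ∃ p ∈ P, g * p * g⁻¹ = x := by
  simp only [conjSub, Subgroup.mem_smul_pointwise_iff_exists, ConjAct.smul_def,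
    ConjAct.ofConjAct_toConjAct]

lemma exists_word {S : Set G} (hgen : Subgroup.closure S = ⊤) (g : G) :
    ∃ l : List G, (∀ x ∈ l, x ∈ S ∨ x⁻¹ ∈ S) ∧ l.prod = g := by
  have hg : g ∈ Submonoid.closure (S ∪ S⁻¹) := by
    rw [← Subgroup.closure_toSubmonoid, hgen]
    exact Subgroup.mem_top g
  obtain ⟨l, hl, hprod⟩ := Submonoid.exists_list_of_mem_closure hg
  exact ⟨l, fun x hx => by
    rcases hl x hx with h | h
    · exact Or.inl h
    · exact Or.inr (Set.mem_inv.mp h), hprod⟩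

/-- A finite collection of infinite subgroups is almost malnormal iff distinct
left cosets have finite intersections of all their closed neighbourhoods. -/
theorem almostMalnormal_iff_coset_nbhds (S : Set G) (hS : S.Finite)
    (hgen : Subgroup.closure S = ⊤) (Ps : Set (Subgroup G)) (hPs : Ps.Finite)
    (hinf : ∀ P ∈ Ps, (P : Set G).Infinite) :
    AlmostMalnormal Ps ↔
      ∀ A ∈ cosetsOf Ps, ∀ B ∈ cosetsOf Ps,
        A = B ∨ ∀ n : ℕ, (nbhd S n A ∩ nbhd S n B).Finite := by
  constructor
  · -- hard direction: almost malnormal ⇒ coset neighbourhood condition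
    rintro hmal A ⟨g, P, hP, rfl⟩ B ⟨h, Q, hQ, rfl⟩
    by_cases hfin : ∀ n : ℕ, (nbhd S n (g • (P : Set G)) ∩ nbhd S n (h • (Q : Set G))).Finite
    · exact Or.inr hfin
    left
    push_neg at hfin
    obtain ⟨n, hn⟩ := hfin
    replace hn : (nbhd S (n : ℕ∞) (g • (P : Set G)) ∩ nbhd S (n : ℕ∞) (h • (Q : Set G))).Infinite := hn
    set X := nbhd S (n : ℕ∞) (g • (P : Set G)) ∩ nbhd S (n : ℕ∞) (h • (Q : Set G)) with hX
    set T := ballSet S n with hT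
    have hTfin : T.Finite := ballSet_finite hS n
    -- pigeonhole over pairs (b, c) ∈ T × T
    have hcover : X ⊆ ⋃ bc ∈ T ×ˢ T,
        ((g • (P : Set G)) * {bc.1}) ∩ ((h • (Q : Set G)) * {bc.2}) := by
      rintro x ⟨hxA, hxB⟩
      obtain ⟨p, hp, b, hb, rfl⟩ := mem_nbhd_coset_iff.mp hxA
      obtain ⟨q, hq, c, hc, hxc⟩ := mem_nbhd_coset_iff.mp hxB
      refine Set.mem_biUnion (Set.mk_mem_prod hb hc) ?_
      exact ⟨⟨g * p, ⟨p, hp, by simp [smul_eq_mul]⟩, b, rfl, rfl⟩,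
        ⟨h * q, ⟨q, hq, by simp [smul_eq_mul]⟩, c, rfl, hxc.symm⟩⟩
    have : ∃ bc ∈ T ×ˢ T,
        (((g • (P : Set G)) * {bc.1}) ∩ ((h • (Q : Set G)) * {bc.2})).Infinite := by
      by_contra hcon
      push_neg at hcon
      exact hn ((Set.Finite.biUnion (hTfin.prod hTfin) hcon).subset hcover)
    obtain ⟨⟨b, c⟩, -, hY⟩ := this
    -- extract the infinite set of `p`'s
    set Z : Set G := {p | p ∈ P ∧ g * p * b ∈ (h • (Q : Set G)) * {c}} with hZ
    have hZinf : Z.Infinite := by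
      by_contra hZf
      rw [Set.not_infinite] at hZf
      refine hY ((hZf.image (f := fun p => g * p * b)).subset ?_)
      rintro x ⟨⟨y, ⟨p, hp, rfl⟩, b', rfl, rfl⟩, hx2⟩
      simp only [Set.mem_singleton_iff] at *
      exact ⟨p, ⟨hp, by simpa [smul_eq_mul] using hx2⟩, by simp [smul_eq_mul]⟩
    obtain ⟨p₀, hp₀⟩ := hZinf.nonempty
    set k := g⁻¹ * h with hk
    -- the map p ↦ p * p₀⁻¹ lands injectively in conjSub k Q ⊓ P
    have hsub : (fun p => p * p₀⁻¹) '' Z ⊆ ((conjSub k Q ⊓ P : Subgroup G) : Set G) := by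
      rintro x ⟨p, hp, rfl⟩
      obtain ⟨hpP, y, ⟨q, hq, rfl⟩, c', hc', hpq⟩ := hp
      obtain ⟨hp₀P, y₀, ⟨q₀, hq₀, rfl⟩, c₀', hc₀', hpq₀⟩ := hp₀
      simp only [Set.mem_singleton_iff] at hc' hc₀'
      rw [hc'] at hpq
      rw [hc₀'] at hpq₀
      have e : h * q * c = g * p * b := by simpa [smul_eq_mul] using hpq
      have e₀ : h * q₀ * c = g * p₀ * b := by simpa [smul_eq_mul] using hpq₀
      rw [SetLike.mem_coe, Subgroup.mem_inf]
      constructor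
      · refine mem_conjSub.mpr ⟨q * q₀⁻¹, Q.mul_mem hq (Q.inv_mem hq₀), ?_⟩
        have hq' : q = h⁻¹ * (g * p * b) * c⁻¹ := by rw [← e]; group
        have hq₀' : q₀ = h⁻¹ * (g * p₀ * b) * c⁻¹ := by rw [← e₀]; group
        rw [hk, hq', hq₀']; group
      · exact P.mul_mem hpP (P.inv_mem hp₀P)
    have hinter : ((conjSub k Q ⊓ P : Subgroup G) : Set G).Infinite :=
      (hZinf.image (fun a _ b _ hab => by simpa using hab)).mono hsub
    rcases hmal Q hQ P hP k with hfin | ⟨hQP, hkQ⟩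
    · exact absurd hfin hinter
    · -- Q = P and k = g⁻¹ h ∈ Q, so the cosets coincide
      have hh : h = g * k := by rw [hk]; group
      rw [hh, mul_smul, smul_coe_of_mem hkQ, hQP]
  · -- easy direction
    intro hcos P hP P' hP' g
    by_cases hfin : ((conjSub g P ⊓ P' : Subgroup G) : Set G).Finite
    · exact Or.inl hfin
    right
    replace hfin : ((conjSub g P ⊓ P' : Subgroup G) : Set G).Infinite := hfin
    obtain ⟨l, hl, hprod⟩ := exists_word hgen g
    set n := l.length with hn
    have hA : g • (P : Set G) ∈ cosetsOf Ps := ⟨g, P, hP, rfl⟩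
    have hB : (1 : G) • (P' : Set G) ∈ cosetsOf Ps := ⟨1, P', hP', rfl⟩
    rcases hcos _ hA _ hB with heq | hallfin
    · -- g • P = P' : conclude P = P' and g ∈ P
      rw [one_smul] at heq
      have hgP' : g ∈ P' := by
        have : g ∈ g • (P : Set G) := ⟨1, P.one_mem, by simp⟩
        rw [heq] at this; exact this
      have hPP' : (P : Set G) = (P' : Set G) := by
        have := congrArg (fun s => g⁻¹ • s) heq
        simpa [smul_coe_of_mem (P'.inv_mem hgP')] using this
      have hPeq : P = P' := SetLike.ext' hPP'
      exact ⟨hPeq, hPeq ▸ hgP'⟩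
    · -- but the subgroup intersection injects into the n-neighbourhood intersection
      exfalso
      refine hfin ?_
      have hsub : ((conjSub g P ⊓ P' : Subgroup G) : Set G) ⊆
          nbhd S (n : ℕ∞) (g • (P : Set G)) ∩ nbhd S (n : ℕ∞) ((1 : G) • (P' : Set G)) := by
        intro x hx
        rw [SetLike.mem_coe, Subgroup.mem_inf] at hx
        obtain ⟨hx1, hx2⟩ := hx
        obtain ⟨p, hp, hpx⟩ := mem_conjSub.mp hx1
        constructor
        · refine ⟨x * g, ⟨p, hp, ?_⟩, ?_⟩
          · rw [← hpx]; simp only [smul_eq_mul]; group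
          · exact wordDist_le_iff.mpr ⟨l, hl, by rw [hprod]; group, le_rfl⟩
        · refine ⟨x, by simpa using hx2, ?_⟩
          exact wordDist_le_iff.mpr ⟨[], by simp, by simp, by simp⟩
      exact (hallfin n).subset hsub
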